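/- For all n ≥ 3 one has ν(n) ≥ ξ(n), where ν(n) is the number of minimal elements of the monoid M_n and ξ(n) = Σ_{p | n, p prime} n/p. -/

import Mathlib

/-- The monoid `M_n` of all `α ∈ ℕ^n` with `α_0 + α_1 ε + ⋯ + α_{n-1} ε^{n-1} = 0`. -/
def cycMonoid (n : ℕ) {k : Type*} [Field k] (ε : k) : Set (Fin n → ℕ) :=
  {α | ∑ i : Fin n, (α i : k) * ε ^ (i : ℕ) = 0}

/-- The set of minimal elements of `M_n`: nonzero elements that are not the sum of two
nonzero elements of `M_n`. -/
def cycMinimal (n : ℕ) {k : Type*} [Field k] (ε : k) : Set (Fin n → ℕ) :=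
  {α ∈ cycMonoid n ε | α ≠ 0 ∧
    ¬∃ β γ : Fin n → ℕ, β ∈ cycMonoid n ε ∧ γ ∈ cycMonoid n ε ∧ β ≠ 0 ∧ γ ≠ 0 ∧ α = β + γ}

open Polynomial in
/-- If a `{0,1}`-combination (in fact any ℕ-combination) of the powers `ζ^0, …, ζ^{p-1}` of a
primitive `p`-th root of unity vanishes, `p` prime, then all coefficients are equal. -/
lemma aux_const_of_sum_eq_zero {k : Type*} [Field k] [CharZero k] {p : ℕ} (hp : p.Prime)
    {ζ : k} (hζ : IsPrimitiveRoot ζ p) (c : Fin p → ℕ)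
    (h : ∑ t : Fin p, (c t : k) * ζ ^ (t : ℕ) = 0) :
    ∀ t, c t = c ⟨0, hp.pos⟩ := by
  haveI : Fact p.Prime := ⟨hp⟩
  set f : ℚ[X] := ∑ t : Fin p, C (c t : ℚ) * X ^ (t : ℕ) with hf
  have hcoeff : ∀ t : Fin p, f.coeff (t : ℕ) = (c t : ℚ) := by
    intro t
    rw [hf, finset_sum_coeff]
    rw [Finset.sum_eq_single t]
    · simp
    · intro b _ hb
      simp [coeff_X_pow, Fin.val_eq_val, Ne.symm hb]
    · simp
  have haev : Polynomial.aeval ζ f = 0 := by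
    rw [hf]
    simp only [map_sum, map_mul, map_pow, aeval_C, aeval_X]
    simpa using h
  have hdvd : minpoly ℚ ζ ∣ f := minpoly.dvd ℚ ζ haev
  have hmin : minpoly ℚ ζ = Polynomial.cyclotomic p ℚ :=
    (Polynomial.cyclotomic_eq_minpoly_rat hζ hp.pos).symm
  rw [hmin] at hdvd
  obtain ⟨q, hq⟩ := hdvd
  have hcyccoeff : ∀ t : Fin p, (Polynomial.cyclotomic p ℚ).coeff (t : ℕ) = 1 := by
    intro t
    rw [Polynomial.cyclotomic_prime]
    rw [finset_sum_coeff, Finset.sum_eq_single (t : ℕ)]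
    · simp
    · intro b _ hb; simp [coeff_X_pow, Ne.symm hb]
    · intro hb; exact absurd (Finset.mem_range.2 t.2) hb
  by_cases hf0 : f = 0
  · intro t
    have h1 : (c t : ℚ) = 0 := by rw [← hcoeff t, hf0]; simp
    have h2 : (c ⟨0, hp.pos⟩ : ℚ) = 0 := by rw [← hcoeff ⟨0, hp.pos⟩, hf0]; simp
    exact_mod_cast h1.trans h2.symm
  · have hq0 : q ≠ 0 := by rintro rfl; simp [hq] at hf0
    have hdegf : f.natDegree ≤ p - 1 := by
      apply Polynomial.natDegree_sum_le_of_forall_le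
      intro t _
      refine (Polynomial.natDegree_C_mul_le _ _).trans ?_
      rw [natDegree_X_pow]
      omega
    have hdegc : (Polynomial.cyclotomic p ℚ).natDegree = p - 1 := by
      rw [Polynomial.natDegree_cyclotomic, Nat.totient_prime hp]
    have hqdeg : q.natDegree = 0 := by
      have := Polynomial.natDegree_mul (Polynomial.cyclotomic_ne_zero p ℚ) hq0
      rw [← hq, hdegc] at this
      omega
    obtain ⟨a, rfl⟩ : ∃ a, q = C a := ⟨q.coeff 0, Polynomial.eq_C_of_natDegree_eq_zero hqdeg⟩
    have key : ∀ t : Fin p, (c t : ℚ) = a := by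
      intro t
      rw [← hcoeff t, hq, Polynomial.coeff_mul_C, hcyccoeff t, one_mul]
    intro t
    have := (key t).trans (key ⟨0, hp.pos⟩).symm
    exact_mod_cast this

/-- The `{0,1}`-vector supported on the residue class `j` modulo `m`. -/
def vvec (n m j : ℕ) : Fin n → ℕ := fun i => if (i : ℕ) % m = j then 1 else 0

lemma sum_fin_mul {M : Type*} [AddCommMonoid M] (p m : ℕ) (f : Fin (p * m) → M) :
    ∑ i, f i = ∑ t : Fin p, ∑ r : Fin m, f (finProdFinEquiv (t, r)) := by
  have := (Fintype.sum_equiv finProdFinEquiv (fun x => f (finProdFinEquiv x)) f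
    (fun x => rfl))
  rw [← this, Fintype.sum_prod_type]

lemma val_fpfe {p m : ℕ} (t : Fin p) (r : Fin m) :
    ((finProdFinEquiv (t, r) : Fin (p * m)) : ℕ) = (r : ℕ) + m * (t : ℕ) := rfl

lemma mod_fpfe {p m : ℕ} (t : Fin p) (r : Fin m) :
    ((finProdFinEquiv (t, r) : Fin (p * m)) : ℕ) % m = (r : ℕ) := by
  rw [val_fpfe, Nat.add_mul_mod_self_left, Nat.mod_eq_of_lt r.2]

/-- Sum over a coset-supported vector. -/
lemma sum_coset {k : Type*} [Field k] (p m j : ℕ) (hj : j < m) (ε : k)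
    (β : Fin (p * m) → ℕ) (hβ : ∀ i : Fin (p * m), (i : ℕ) % m ≠ j → β i = 0) :
    ∑ i : Fin (p * m), (β i : k) * ε ^ (i : ℕ)
      = ∑ t : Fin p, (β (finProdFinEquiv (t, ⟨j, hj⟩)) : k) * (ε ^ j * (ε ^ m) ^ (t : ℕ)) := by
  rw [sum_fin_mul]
  refine Finset.sum_congr rfl fun t _ => ?_
  rw [Finset.sum_eq_single (⟨j, hj⟩ : Fin m)]
  · rw [val_fpfe, ← pow_mul, ← pow_add]
  · intro r _ hr
    have : ((finProdFinEquiv (t, r) : Fin (p * m)) : ℕ) % m ≠ j := by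
      rw [mod_fpfe]
      intro h
      exact hr (Fin.ext h)
    rw [hβ _ this]
    simp
  · intro h; exact absurd (Finset.mem_univ _) h

lemma vvec_minimal {k : Type*} [Field k] [CharZero k] {n p m : ℕ} (hp : p.Prime)
    (hnm : n = p * m) (hm : 0 < m) {j : ℕ} (hj : j < m) {ε : k}
    (hε : IsPrimitiveRoot ε n) : vvec n m j ∈ cycMinimal n ε := by
  subst hnm
  have hnpos : 0 < p * m := Nat.mul_pos hp.pos hm
  have hζ : IsPrimitiveRoot (ε ^ m) p := hε.pow hnpos (mul_comm p m)
  have hε0 : ε ≠ 0 := hε.ne_zero hnpos.ne'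
  have hsupp : ∀ i : Fin (p * m), (i : ℕ) % m ≠ j → vvec (p * m) m j i = 0 := by
    intro i hi; simp [vvec, hi]
  have hvval : ∀ t : Fin p, vvec (p * m) m j (finProdFinEquiv (t, ⟨j, hj⟩)) = 1 := by
    intro t
    show (if _ then _ else _) = 1
    rw [if_pos (mod_fpfe t ⟨j, hj⟩)]
  have hmem : vvec (p * m) m j ∈ cycMonoid (p * m) ε := by
    show ∑ i : Fin (p * m), ((vvec (p * m) m j i : ℕ) : k) * ε ^ (i : ℕ) = 0
    rw [sum_coset p m j hj ε _ hsupp]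
    simp only [hvval, Nat.cast_one, one_mul]
    rw [← Finset.mul_sum, Fin.sum_univ_eq_sum_range (fun i => (ε ^ m) ^ i) p,
      hζ.geom_sum_eq_zero hp.one_lt, mul_zero]
  refine ⟨hmem, ?_, ?_⟩
  · intro h0
    have hjn : j < p * m := lt_of_lt_of_le hj (Nat.le_mul_of_pos_left m hp.pos)
    have := congrFun h0 ⟨j, hjn⟩
    simp [vvec, Nat.mod_eq_of_lt hj] at this
  · rintro ⟨β, γ, hβm, hγm, hβ0, hγ0, hsum⟩
    have hle : ∀ i, β i + γ i = vvec (p * m) m j i := fun i => (congrFun hsum i).symm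
    have hβsupp : ∀ i : Fin (p * m), (i : ℕ) % m ≠ j → β i = 0 := by
      intro i hi
      have := hle i
      rw [hsupp i hi] at this
      omega
    set c : Fin p → ℕ := fun t => β (finProdFinEquiv (t, ⟨j, hj⟩)) with hc
    have hsumβ : ∑ t : Fin p, (c t : k) * (ε ^ m) ^ (t : ℕ) = 0 := by
      have h0 : ∑ i : Fin (p * m), ((β i : ℕ) : k) * ε ^ (i : ℕ) = 0 := hβm
      rw [sum_coset p m j hj ε _ hβsupp] at h0
      have h1 : (∑ t : Fin p, (c t : k) * (ε ^ m) ^ (t : ℕ)) * ε ^ j = 0 := by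
        rw [Finset.sum_mul, ← h0]
        refine Finset.sum_congr rfl fun t _ => by ring
      rcases mul_eq_zero.1 h1 with h | h
      · exact h
      · exact absurd h (pow_ne_zero _ hε0)
    have hconst := aux_const_of_sum_eq_zero hp hζ c hsumβ
    set a : ℕ := c ⟨0, hp.pos⟩ with ha
    have hβval : ∀ i : Fin (p * m), (i : ℕ) % m = j → β i = a := by
      intro i hi
      have hdiv : (i : ℕ) / m < p := (Nat.div_lt_iff_lt_mul hm).2 (by
        have := i.2; omega)
      have hi' : i = finProdFinEquiv (⟨(i : ℕ) / m, hdiv⟩, ⟨j, hj⟩) := by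
        apply Fin.ext
        rw [val_fpfe]
        show (i : ℕ) = j + m * ((i : ℕ) / m)
        rw [← hi]
        exact (Nat.mod_add_div _ _).symm
      rw [hi']
      exact hconst ⟨(i : ℕ) / m, hdiv⟩
    rcases Nat.eq_zero_or_pos a with ha0 | ha1
    · apply hβ0
      funext i
      by_cases hi : (i : ℕ) % m = j
      · rw [hβval i hi, ha0]; rfl
      · rw [hβsupp i hi]; rfl
    · apply hγ0
      funext i
      have h1 := hle i
      by_cases hi : (i : ℕ) % m = j
      · have h2 := hβval i hi
        have h3 : vvec (p * m) m j i = 1 := by simp [vvec, hi]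
        show γ i = 0
        omega
      · have h2 := hβsupp i hi
        have h3 := hsupp i hi
        show γ i = 0
        omega

lemma cycMinimal_finite {k : Type*} [Field k] (n : ℕ) (ε : k) :
    (cycMinimal n ε).Finite := by
  have hpwo : (cycMinimal n ε).IsPWO :=
    Set.isPWO_of_wellQuasiOrderedLE (cycMinimal n ε)
  refine IsAntichain.finite_of_partiallyWellOrderedOn ?_ hpwo
  intro α hα β hβ hne hle
  obtain ⟨hαmon, hα0, -⟩ := hα
  obtain ⟨hβmon, hβ0, hβmin⟩ := hβ
  refine hβmin ⟨α, β - α, hαmon, ?_, hα0, ?_, ?_⟩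
  · show ∑ i : Fin n, (((β - α) i : ℕ) : k) * ε ^ (i : ℕ) = 0
    have hcast : ∀ i : Fin n, (((β - α) i : ℕ) : k) = (β i : k) - (α i : k) := by
      intro i
      show ((β i - α i : ℕ) : k) = _
      rw [Nat.cast_sub (hle i)]
    simp only [hcast, sub_mul]
    rw [Finset.sum_sub_distrib]
    have h1 : ∑ i : Fin n, (β i : k) * ε ^ (i : ℕ) = 0 := hβmon
    have h2 : ∑ i : Fin n, (α i : k) * ε ^ (i : ℕ) = 0 := hαmon
    rw [h1, h2, sub_zero]
  · intro h0
    apply hne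
    funext i
    have h1 : (β - α) i = 0 := congrFun h0 i
    have h2 : β i - α i = 0 := h1
    have h3 : α i ≤ β i := hle i
    omega
  · funext i
    show β i = α i + (β i - α i)
    have h3 : α i ≤ β i := hle i
    omega

lemma vvec_inj {n p p' j j' : ℕ} (_hn : 0 < n) (hp : 2 ≤ p) (hp' : 2 ≤ p')
    (hpn : p ∣ n) (hp'n : p' ∣ n) (hj : j < n / p) (hj' : j' < n / p')
    (h : vvec n (n / p) j = vvec n (n / p') j') : p = p' ∧ j = j' := by
  set m := n / p with hm
  set m' := n / p' with hm'
  have hpm : p * m = n := Nat.mul_div_cancel' hpn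
  have hpm' : p' * m' = n := Nat.mul_div_cancel' hp'n
  have hm0 : 0 < m := by
    rcases Nat.eq_zero_or_pos m with h0 | h0
    · omega
    · exact h0
  have hm'0 : 0 < m' := by
    rcases Nat.eq_zero_or_pos m' with h0 | h0
    · omega
    · exact h0
  have hmn : 2 * m ≤ n := by calc 2 * m ≤ p * m := Nat.mul_le_mul_right m hp
                                 _ = n := hpm
  have hm'n : 2 * m' ≤ n := by calc 2 * m' ≤ p' * m' := Nat.mul_le_mul_right m' hp'
                                 _ = n := hpm'
  -- evaluate at j
  have e1 : j % m' = j' := by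
    have := congrFun h ⟨j, by omega⟩
    simp only [vvec] at this
    rw [if_pos (Nat.mod_eq_of_lt hj)] at this
    by_contra hc
    rw [if_neg hc] at this
    exact one_ne_zero this
  have e2 : j' % m = j := by
    have := congrFun h ⟨j', by omega⟩
    simp only [vvec] at this
    rw [if_pos (Nat.mod_eq_of_lt hj')] at this
    by_contra hc
    rw [if_neg hc] at this
    exact one_ne_zero this.symm
  have hjj' : j = j' := by
    have l1 : j' ≤ j := e1 ▸ Nat.mod_le j m'
    have l2 : j ≤ j' := e2 ▸ Nat.mod_le j' m
    omega
  subst hjj'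
  -- evaluate at j + m
  have e3 : (j + m) % m' = j := by
    have := congrFun h ⟨j + m, by omega⟩
    simp only [vvec] at this
    rw [if_pos (by rw [Nat.add_mod_right, Nat.mod_eq_of_lt hj])] at this
    by_contra hc
    rw [if_neg hc] at this
    exact one_ne_zero this
  have e4 : (j + m') % m = j := by
    have := congrFun h ⟨j + m', by omega⟩
    simp only [vvec] at this
    rw [if_pos (show (j + m') % m' = j by rw [Nat.add_mod_right]; exact Nat.mod_eq_of_lt hj')]
      at this
    by_contra hc
    rw [if_neg hc] at this
    exact one_ne_zero this.symm
  have d1 : m' ∣ m := by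
    have : Nat.ModEq m' j (j + m) := by
      show j % m' = (j + m) % m'
      rw [e1, e3]
    have := (Nat.modEq_iff_dvd' (Nat.le_add_right j m)).1 this
    simpa using this
  have d2 : m ∣ m' := by
    have : Nat.ModEq m j (j + m') := by
      show j % m = (j + m') % m
      rw [e2, e4]
    have := (Nat.modEq_iff_dvd' (Nat.le_add_right j m')).1 this
    simpa using this
  have hmm : m = m' := Nat.dvd_antisymm d2 d1
  have hpp : p = p' := by
    apply Nat.eq_of_mul_eq_mul_right hm0
    rw [hpm, hmm, hpm']
  exact ⟨hpp, rfl⟩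

/-- For all `n ≥ 3`, `ν(n) ≥ ξ(n)`, where `ν(n)` is the number of
minimal elements of `M_n` and `ξ(n) = Σ_{p ∣ n prime} n/p`. -/
theorem stmt_12 {k : Type*} [Field k] [CharZero k] (n : ℕ) (hn : 3 ≤ n)
    (ε : k) (hε : IsPrimitiveRoot ε n) :
    ∑ p ∈ n.primeFactors, n / p ≤ (cycMinimal n ε).ncard := by
  classical
  have hn0 : 0 < n := by omega
  set D : Finset ((_ : ℕ) × ℕ) := n.primeFactors.sigma fun p => Finset.range (n / p) with hD
  set S : Finset (Fin n → ℕ) := D.image (fun q => vvec n (n / q.1) q.2) with hS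
  have hmemD : ∀ q : (_ : ℕ) × ℕ, q ∈ D → q.1.Prime ∧ q.1 ∣ n ∧ q.2 < n / q.1 := by
    intro q hq
    rw [hD, Finset.mem_sigma, Finset.mem_range] at hq
    exact ⟨Nat.prime_of_mem_primeFactors hq.1, Nat.dvd_of_mem_primeFactors hq.1, hq.2⟩
  have hsub : (S : Set (Fin n → ℕ)) ⊆ cycMinimal n ε := by
    intro α hα
    rw [hS, Finset.coe_image] at hα
    obtain ⟨q, hq, rfl⟩ := hα
    obtain ⟨hq1, hq2, hq3⟩ := hmemD q hq
    exact vvec_minimal hq1 (Nat.mul_div_cancel' hq2).symm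
      (Nat.div_pos (Nat.le_of_dvd hn0 hq2) hq1.pos) hq3 hε
  have hinj : Set.InjOn (fun q : (_ : ℕ) × ℕ => vvec n (n / q.1) q.2) D := by
    intro q hq q' hq' h
    obtain ⟨hq1, hq2, hq3⟩ := hmemD q hq
    obtain ⟨hq1', hq2', hq3'⟩ := hmemD q' hq'
    obtain ⟨h1, h2⟩ := vvec_inj hn0 hq1.two_le hq1'.two_le hq2 hq2' hq3 hq3' h
    exact Sigma.ext h1 (heq_of_eq h2)
  have hcard : S.card = ∑ p ∈ n.primeFactors, n / p := by
    rw [hS, Finset.card_image_of_injOn hinj, hD, Finset.card_sigma]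
    simp
  calc ∑ p ∈ n.primeFactors, n / p = S.card := hcard.symm
    _ = (S : Set (Fin n → ℕ)).ncard := (Set.ncard_coe_finset S).symm
    _ ≤ (cycMinimal n ε).ncard := Set.ncard_le_ncard hsub (cycMinimal_finite n ε)
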